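/- arXiv:2503.12940 — 3 statements merged into one kernel-verified Lean document; each statement's English description precedes it below -/
import Mathlib

section
/- Let X be a reflexive Banach space. Then every closed subspace of X is the kernel of some bounded operator X → X if and only if every closed subspace of X* is the closure of the image of some bounded operator X* → X*. -/
open NormedSpace

set_option maxHeartbeats 1000000

/-- Hahn-Banach separation of a point from a closed subspace. -/
lemma aux_sep {𝕜 E : Type*} [RCLike 𝕜] [NormedAddCommGroup E] [NormedSpace 𝕜 E]
    (M : Submodule 𝕜 E) (hM : IsClosed (M : Set E)) {x : E} (hx : x ∉ M) :
    ∃ f : E →L[𝕜] 𝕜, (∀ m ∈ M, f m = 0) ∧ f x ≠ 0 := by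
  haveI : IsClosed (M : Set E) := hM
  let Q : E →L[𝕜] E ⧸ M :=
    M.mkQ.mkContinuous 1 (fun m => by
      simpa using Submodule.Quotient.norm_mk_le M m)
  have hxQ : Q x ≠ 0 := by
    simp only [Q, LinearMap.mkContinuous_apply, Submodule.mkQ_apply]
    rw [Ne, Submodule.Quotient.mk_eq_zero]
    exact hx
  obtain ⟨g, -, hg⟩ := exists_dual_vector 𝕜 (Q x) (norm_ne_zero_iff.mpr hxQ)
  refine ⟨g.comp Q, fun m hm => ?_, ?_⟩
  · have : Q m = 0 := by
      simp only [Q, LinearMap.mkContinuous_apply, Submodule.mkQ_apply]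
      rwa [Submodule.Quotient.mk_eq_zero]
    simp [this]
  · have : ‖Q x‖ ≠ 0 := norm_ne_zero_iff.mpr hxQ
    simp only [ContinuousLinearMap.comp_apply, hg]
    exact_mod_cast this

/-- The dual map of a continuous linear map, as a continuous linear map on duals. -/
noncomputable def auxDualMap {𝕜 E : Type*} [RCLike 𝕜] [NormedAddCommGroup E] [NormedSpace 𝕜 E]
    (T : E →L[𝕜] E) : StrongDual 𝕜 E →L[𝕜] StrongDual 𝕜 E :=
  LinearMap.mkContinuous
    { toFun := fun f => f.comp T
      map_add' := fun f g => by ext x; simp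
      map_smul' := fun c f => by ext x; simp }
    ‖T‖ (fun f => by
      simp only [LinearMap.coe_mk, AddHom.coe_mk]
      calc ‖f.comp T‖ ≤ ‖f‖ * ‖T‖ := ContinuousLinearMap.opNorm_comp_le f T
        _ = ‖T‖ * ‖f‖ := mul_comm _ _)

@[simp] lemma auxDualMap_apply {𝕜 E : Type*} [RCLike 𝕜] [NormedAddCommGroup E] [NormedSpace 𝕜 E]
    (T : E →L[𝕜] E) (f : StrongDual 𝕜 E) (x : E) : auxDualMap T f x = f (T x) := rfl

/-- Let `X` be a reflexive Banach space. Every closed subspace of `X` is the kernel of some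
bounded operator `X → X` if and only if every closed subspace of `X*` is the closure of the
image of some bounded operator `X* → X*`. -/
theorem stmt0 {𝕜 : Type*} [RCLike 𝕜] {X : Type*} [NormedAddCommGroup X] [NormedSpace 𝕜 X]
    [CompleteSpace X]
    (hrefl : Function.Surjective (inclusionInDoubleDual 𝕜 X)) :
    (∀ Y : Submodule 𝕜 X, IsClosed (Y : Set X) →
      ∃ T : X →L[𝕜] X, LinearMap.ker (T : X →ₗ[𝕜] X) = Y) ↔
    (∀ Z : Submodule 𝕜 (StrongDual 𝕜 X), IsClosed (Z : Set (StrongDual 𝕜 X)) →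
      ∃ S : StrongDual 𝕜 X →L[𝕜] StrongDual 𝕜 X, closure (Set.range S) = (Z : Set (StrongDual 𝕜 X))) := by
  constructor
  · intro h Z hZ
    -- pre-annihilator of Z
    let Y : Submodule 𝕜 X :=
      { carrier := {x | ∀ f ∈ Z, f x = 0}
        add_mem' := fun ha hb f hf => by simp [ha f hf, hb f hf]
        zero_mem' := fun f _ => by simp
        smul_mem' := fun c x hx f hf => by simp [hx f hf] }
    have hYmem : ∀ x : X, x ∈ Y ↔ ∀ f ∈ Z, f x = 0 := fun _ => Iff.rfl
    have hYclosed : IsClosed (Y : Set X) := by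
      have : (Y : Set X) = ⋂ f ∈ Z, (f ⁻¹' {0} : Set X) := by
        ext x; simp [hYmem, Set.mem_iInter]
      rw [this]
      exact isClosed_biInter fun f _ => isClosed_singleton.preimage f.continuous
    obtain ⟨T, hT⟩ := h Y hYclosed
    refine ⟨auxDualMap T, ?_⟩
    apply subset_antisymm
    · -- closure (range S) ⊆ Z
      refine closure_minimal ?_ hZ
      rintro _ ⟨f, rfl⟩
      -- f ∘ T vanishes on Y = ker T; show f ∘ T ∈ Z.
      by_contra hgnZ
      obtain ⟨Φ, hΦZ, hΦg⟩ := aux_sep Z hZ hgnZ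
      obtain ⟨x, rfl⟩ := hrefl Φ
      have hxY : x ∈ Y := fun f' hf' => hΦZ f' hf'
      have hTx : T x = 0 := by
        have hk : x ∈ LinearMap.ker (T : X →ₗ[𝕜] X) := by rw [hT]; exact hxY
        exact hk
      apply hΦg
      show (auxDualMap T f) x = 0
      rw [auxDualMap_apply, hTx, map_zero]
    · -- Z ⊆ closure (range S)
      intro g hg
      by_contra hgc
      have hMclosed : IsClosed ((LinearMap.range (auxDualMap T : StrongDual 𝕜 X →ₗ[𝕜] StrongDual 𝕜 X)).topologicalClosure :
          Set (StrongDual 𝕜 X)) := Submodule.isClosed_topologicalClosure _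
      have hgM : g ∉ (LinearMap.range (auxDualMap T : StrongDual 𝕜 X →ₗ[𝕜] StrongDual 𝕜 X)).topologicalClosure := by
        intro hmem
        apply hgc
        have : ((LinearMap.range (auxDualMap T : StrongDual 𝕜 X →ₗ[𝕜] StrongDual 𝕜 X)).topologicalClosure : Set (StrongDual 𝕜 X)) =
            closure (Set.range (auxDualMap T)) := by
          simp [Submodule.topologicalClosure_coe, LinearMap.coe_range]
        rw [← this]; exact hmem
      obtain ⟨Φ, hΦM, hΦg⟩ := aux_sep _ hMclosed hgM
      obtain ⟨x, rfl⟩ := hrefl Φ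
      have hTx : T x = 0 := by
        have hx : ∀ f : StrongDual 𝕜 X, f (T x) = 0 := by
          intro f
          have : (auxDualMap T f) ∈ (LinearMap.range (auxDualMap T : StrongDual 𝕜 X →ₗ[𝕜] StrongDual 𝕜 X)).topologicalClosure :=
            (LinearMap.range (auxDualMap T : StrongDual 𝕜 X →ₗ[𝕜] StrongDual 𝕜 X)).le_topologicalClosure ⟨f, rfl⟩
          have := hΦM _ this
          simpa using this
        exact (eq_zero_iff_forall_dual_eq_zero 𝕜 (T x)).mpr hx
      have hxY : x ∈ Y := by rw [← hT, LinearMap.mem_ker]; exact hTx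
      exact hΦg (hxY g hg)
  · intro h Y hY
    -- annihilator of Y
    let Z : Submodule 𝕜 (StrongDual 𝕜 X) :=
      { carrier := {f | ∀ y ∈ Y, f y = 0}
        add_mem' := fun ha hb y hy => by simp [ha y hy, hb y hy]
        zero_mem' := fun y _ => by simp
        smul_mem' := fun c f hf y hy => by simp [hf y hy] }
    have hZclosed : IsClosed (Z : Set (StrongDual 𝕜 X)) := by
      have : (Z : Set (StrongDual 𝕜 X)) = ⋂ y ∈ Y, {f : StrongDual 𝕜 X | f y = 0} := by
        ext f; simp [Set.mem_iInter]; rfl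
      rw [this]
      exact isClosed_biInter fun y _ =>
        isClosed_singleton.preimage
          (show Continuous fun f : StrongDual 𝕜 X => f y from (inclusionInDoubleDual 𝕜 X y).continuous)
    obtain ⟨S, hS⟩ := h Z hZclosed
    -- reflexivity isometry equivalence
    obtain ⟨e, he⟩ : ∃ e : X ≃ₗᵢ[𝕜] StrongDual 𝕜 (StrongDual 𝕜 X), ∀ (x : X) (f : StrongDual 𝕜 X), e x f = f x := by
      refine ⟨LinearIsometryEquiv.ofSurjective (inclusionInDoubleDualLi 𝕜 (E := X)) hrefl,
        fun x f => ?_⟩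
      rw [show (LinearIsometryEquiv.ofSurjective (inclusionInDoubleDualLi 𝕜 (E := X)) hrefl :
          X → StrongDual 𝕜 (StrongDual 𝕜 X)) x = inclusionInDoubleDualLi 𝕜 (E := X) x from
        congrFun (LinearIsometryEquiv.coe_ofSurjective _ hrefl) x]
      rfl
    obtain ⟨T, hTx⟩ : ∃ T : X →L[𝕜] X, ∀ x : X, T x = e.symm (auxDualMap S (e x)) := by
      refine ⟨((e.symm.toLinearIsometry.toContinuousLinearMap).comp (auxDualMap S)).comp
        e.toLinearIsometry.toContinuousLinearMap, fun x => ?_⟩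
      simp only [ContinuousLinearMap.comp_apply,
        LinearIsometry.coe_toContinuousLinearMap, LinearIsometryEquiv.coe_toLinearIsometry]
    refine ⟨T, ?_⟩
    ext x
    rw [LinearMap.mem_ker, ContinuousLinearMap.coe_coe]
    have hTx : T x = e.symm (auxDualMap S (e x)) := hTx x
    constructor
    · intro hx
      -- T x = 0 means ∀ f, (S f) x = 0, i.e. x ∈ (range S)_⊥ = Z_⊥ = Y
      have h0 : auxDualMap S (e x) = 0 := by
        have := congrArg e hx
        rw [hTx, LinearIsometryEquiv.map_zero] at this
        simpa using this
      have hx' : ∀ f : StrongDual 𝕜 X, (S f) x = 0 := by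
        intro f
        have := congrFun (congrArg (fun (g : StrongDual 𝕜 (StrongDual 𝕜 X)) => (g : StrongDual 𝕜 X → 𝕜)) h0) f
        simpa [auxDualMap_apply, he] using this
      -- hence x ∈ Z_⊥
      by_contra hxY
      obtain ⟨f, hfY, hfx⟩ := aux_sep Y hY hxY
      have hfZ : f ∈ Z := fun y hy => hfY y hy
      -- f ∈ Z = closure (range S); but g ↦ g x vanishes on range S and is continuous
      have : f x = 0 := by
        have hcont : Continuous fun g : StrongDual 𝕜 X => g x :=
          (inclusionInDoubleDual 𝕜 X x).continuous
        have hset : (Z : Set (StrongDual 𝕜 X)) ⊆ {g : StrongDual 𝕜 X | g x = 0} := by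
          rw [← hS]
          refine closure_minimal ?_ (isClosed_singleton.preimage hcont)
          rintro _ ⟨f', rfl⟩
          exact hx' f'
        exact hset hfZ
      exact hfx this
    · intro hx
      -- x ∈ Y ⇒ ∀ f, S f ∈ Z ⇒ (S f) x = 0 ⇒ auxDualMap S (e x) = 0 ⇒ T x = 0
      have hx' : ∀ f : StrongDual 𝕜 X, (S f) x = 0 := by
        intro f
        have hmem : S f ∈ (Z : Set (StrongDual 𝕜 X)) := by
          rw [← hS]; exact subset_closure ⟨f, rfl⟩
        exact hmem x hx
      have h0 : auxDualMap S (e x) = 0 := by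
        ext f
        simp [auxDualMap_apply, he, hx' f]
      rw [hTx, h0, LinearIsometryEquiv.map_zero]
end

section
/- Let Γ be an uncountable set and p, q ∈ [1, ∞). There exists a bounded linear injection ℓ_p(Γ) → ℓ_q(Γ) if and only if p ≤ q. -/
open scoped ENNReal
open Filter

section Helpers

/-- Uncountable pigeonhole over ℕ. -/
lemma uncountable_pigeonhole {ι : Type*} {A : Set ι} (hA : ¬ A.Countable)
    (f : ι → ℕ) : ∃ n, ¬ (A ∩ f ⁻¹' {n}).Countable := by
  by_contra h
  push_neg at h
  exact hA (by
    have : A = ⋃ n : ℕ, A ∩ f ⁻¹' {n} := by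
      ext i; simp
    rw [this]
    exact Set.countable_iUnion h)

/-- Weak Δ-system lemma: from an uncountable family of finite sets of bounded size,
one can extract an infinite sequence whose pairwise intersections lie in a fixed finite set. -/
lemma exists_weak_delta {ι Γ : Type*} :
    ∀ (n : ℕ) (A : Set ι), ¬ A.Countable → ∀ (F : ι → Finset Γ),
      (∀ i ∈ A, (F i).card ≤ n) →
    ∃ (R : Finset Γ) (c : ℕ → ι), Function.Injective c ∧ (∀ k, c k ∈ A) ∧
      ∀ j k, j ≠ k → ∀ y, y ∈ F (c j) → y ∈ F (c k) → y ∈ R := by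
  classical
  intro n
  induction n with
  | zero =>
    intro A hA F hF
    have hinf : A.Infinite := fun hfin => hA hfin.countable
    refine ⟨∅, fun k => hinf.natEmbedding A k, ?_, fun k => (hinf.natEmbedding A k).2, ?_⟩
    · intro j k h
      exact (hinf.natEmbedding A).injective (Subtype.ext h)
    · intro j k _ y hyj _
      have : F ((hinf.natEmbedding A j : ι)) = ∅ :=
        Finset.card_eq_zero.mp (Nat.le_zero.mp (hF _ (hinf.natEmbedding A j).2))
      rw [this] at hyj
      simp at hyj
  | succ n ih =>
    intro A hA F hF
    by_cases hpop : ∃ x : Γ, ¬ (A ∩ {i | x ∈ F i}).Countable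
    · obtain ⟨x, hx⟩ := hpop
      obtain ⟨R', c, hinj, hmem, hR'⟩ := ih (A ∩ {i | x ∈ F i}) hx (fun i => (F i).erase x)
        (fun i hi => by
          rw [Finset.card_erase_of_mem hi.2]
          have := hF i hi.1
          omega)
      refine ⟨insert x R', c, hinj, fun k => (hmem k).1, ?_⟩
      intro j k hjk y hy1 hy2
      rcases eq_or_ne y x with rfl | hyx
      · exact Finset.mem_insert_self _ _
      · exact Finset.mem_insert_of_mem (hR' j k hjk y
          (Finset.mem_erase.mpr ⟨hyx, hy1⟩) (Finset.mem_erase.mpr ⟨hyx, hy2⟩))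
    · push_neg at hpop
      -- no popular element: build a pairwise disjoint sequence
      set bad : Finset ι → Set ι := fun t =>
        ↑t ∪ ⋃ i ∈ t, ⋃ x ∈ F i, (A ∩ {j | x ∈ F j}) with hbad_def
      have hbad : ∀ t, (bad t).Countable := by
        intro t
        refine (t.countable_toSet).union ?_
        refine Set.Countable.biUnion (t.countable_toSet) (fun i _ => ?_)
        exact Set.Countable.biUnion (F i).countable_toSet (fun x _ => hpop x)
      have hex : ∀ t : Finset ι, ∃ i, i ∈ A \ bad t := by
        intro t
        by_contra h
        push_neg at h
        refine hA (((hbad t).mono ?_))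
        intro i hi
        by_contra hbi
        exact (h i) ⟨hi, hbi⟩
      choose pick hpick using hex
      set s : ℕ → Finset ι := fun k => Nat.rec ∅ (fun _ t => insert (pick t) t) k with hs_def
      have hs_succ : ∀ k, s (k + 1) = insert (pick (s k)) (s k) := fun k => rfl
      set c : ℕ → ι := fun k => pick (s k) with hc_def
      have hmono : ∀ j k, j ≤ k → s j ⊆ s k := by
        intro j k hjk
        induction k with
        | zero => simp only [Nat.le_zero] at hjk; subst hjk; exact Finset.Subset.refl _
        | succ k ihk =>
          rcases Nat.lt_succ_iff_lt_or_eq.mp (Nat.lt_succ_of_le hjk) with h | h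
          · exact (ihk (Nat.lt_succ_iff.mp h)).trans
              (by rw [hs_succ]; exact Finset.subset_insert _ _)
          · subst h; exact Finset.Subset.refl _
      have hcs : ∀ j k, j < k → c j ∈ s k := by
        intro j k hjk
        have : c j ∈ s (j + 1) := by rw [hs_succ]; exact Finset.mem_insert_self _ _
        exact hmono (j+1) k hjk this
      have hcnot : ∀ k, c k ∉ s k := by
        intro k hk
        exact (hpick (s k)).2 (Or.inl hk)
      have hcA : ∀ k, c k ∈ A := fun k => (hpick (s k)).1
      have hinj : Function.Injective c := by
        intro j k hjk
        by_contra hne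
        rcases Ne.lt_or_gt hne with h | h
        · exact hcnot k (hjk ▸ hcs j k h)
        · exact hcnot j (hjk ▸ hcs k j h)
      have hdisj : ∀ j k, j < k → ∀ y, y ∈ F (c j) → y ∉ F (c k) := by
        intro j k hjk y hyj hyk
        have : c k ∈ bad (s k) := by
          refine Or.inr ?_
          refine Set.mem_biUnion (hcs j k hjk) ?_
          exact Set.mem_biUnion hyj ⟨hcA k, hyk⟩
        exact (hpick (s k)).2 this
      refine ⟨∅, c, hinj, hcA, ?_⟩
      intro j k hjk y hy1 hy2
      rcases Ne.lt_or_gt hjk with h | h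
      · exact absurd hy2 (hdisj j k h y hy1)
      · exact absurd hy1 (hdisj k j h y hy2)

variable {𝕜 : Type*} [RCLike 𝕜] {Γ : Type*}





/-- Norm comparison for the inclusion `ℓ_p ⊆ ℓ_q`, `p ≤ q`. -/
lemma lp_norm_le_of_le {p q : ℝ≥0∞} (hp0 : 0 < p.toReal) (hq0 : 0 < q.toReal)
    (hpq : p.toReal ≤ q.toReal) (f : lp (fun _ : Γ => 𝕜) p)
    (g : lp (fun _ : Γ => 𝕜) q) (hfg : ∀ γ, f γ = g γ) : ‖g‖ ≤ ‖f‖ := by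
  refine lp.norm_le_of_forall_sum_le hq0 (lp.norm_nonneg' f) ?_
  intro s
  have key : ∀ γ : Γ, ‖g γ‖ ^ q.toReal ≤ ‖f γ‖ ^ p.toReal * ‖f‖ ^ (q.toReal - p.toReal) := by
    intro γ
    rw [← hfg γ]
    rcases eq_or_lt_of_le (norm_nonneg (f γ)) with h0 | h0
    · rw [← h0, Real.zero_rpow hq0.ne', Real.zero_rpow hp0.ne', zero_mul]
    · calc ‖f γ‖ ^ q.toReal = ‖f γ‖ ^ p.toReal * ‖f γ‖ ^ (q.toReal - p.toReal) := by
            rw [← Real.rpow_add h0]; ring_nf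
      _ ≤ ‖f γ‖ ^ p.toReal * ‖f‖ ^ (q.toReal - p.toReal) := by
            refine mul_le_mul_of_nonneg_left ?_ (by positivity)
            exact Real.rpow_le_rpow (norm_nonneg _)
              (lp.norm_apply_le_norm (fun h => by simp [h] at hp0) f γ) (by linarith)
  calc ∑ γ ∈ s, ‖g γ‖ ^ q.toReal ≤ ∑ γ ∈ s, ‖f γ‖ ^ p.toReal * ‖f‖ ^ (q.toReal - p.toReal) :=
        Finset.sum_le_sum fun γ _ => key γ
    _ = (∑ γ ∈ s, ‖f γ‖ ^ p.toReal) * ‖f‖ ^ (q.toReal - p.toReal) := by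
        rw [Finset.sum_mul]
    _ ≤ ‖f‖ ^ p.toReal * ‖f‖ ^ (q.toReal - p.toReal) :=
        mul_le_mul_of_nonneg_right (lp.sum_rpow_le_norm_rpow hp0 f s)
          (Real.rpow_nonneg (lp.norm_nonneg' f) _)
    _ = ‖f‖ ^ q.toReal := by
        rcases eq_or_lt_of_le (lp.norm_nonneg' f) with h0 | h0
        · rw [← h0, Real.zero_rpow hp0.ne', zero_mul, Real.zero_rpow hq0.ne']
        · rw [← Real.rpow_add h0]; ring_nf

lemma exists_lp_inclusion {p q : ℝ≥0∞} [Fact (1 ≤ p)] [Fact (1 ≤ q)]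
    (hp : p ≠ ∞) (hq : q ≠ ∞) (hpq : p ≤ q) :
    ∃ f : lp (fun _ : Γ => 𝕜) p →L[𝕜] lp (fun _ : Γ => 𝕜) q, Function.Injective f := by
  have hp1 : (1 : ℝ≥0∞) ≤ p := Fact.out
  have hq1 : (1 : ℝ≥0∞) ≤ q := Fact.out
  have hp0 : 0 < p.toReal := ENNReal.toReal_pos (by intro h; rw [h] at hp1; simp at hp1) hp
  have hq0 : 0 < q.toReal := ENNReal.toReal_pos (by intro h; rw [h] at hq1; simp at hq1) hq
  have hpq' : p.toReal ≤ q.toReal := ENNReal.toReal_mono hq hpq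
  set L : lp (fun _ : Γ => 𝕜) p →ₗ[𝕜] lp (fun _ : Γ => 𝕜) q :=
    { toFun := fun f => ⟨(f : ∀ _ : Γ, 𝕜), (lp.memℓp f).of_exponent_ge hpq⟩
      map_add' := fun f g => by ext γ; simp [lp.coeFn_add]
      map_smul' := fun c f => by ext γ; simp [lp.coeFn_smul] } with hL
  have hbound : ∀ f, ‖L f‖ ≤ 1 * ‖f‖ := by
    intro f
    rw [one_mul]
    exact lp_norm_le_of_le hp0 hq0 hpq' f (L f) (fun γ => rfl)
  refine ⟨L.mkContinuous 1 hbound, ?_⟩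
  intro f g hfg
  have : ∀ γ, f γ = g γ := by
    intro γ
    have := congrArg (fun h : lp (fun _ : Γ => 𝕜) q => (h : ∀ _ : Γ, 𝕜) γ) hfg
    exact this
  exact lp.ext (funext this)




variable {q : ℝ≥0∞} [Fact (1 ≤ q)]

/-- Restriction of an `ℓ^q` element to a finite set, as a linear map into `PiLp q`. -/
noncomputable def lpRestr (q : ℝ≥0∞) (s : Finset Γ) :
    lp (fun _ : Γ => 𝕜) q →ₗ[𝕜] PiLp q (fun _ : s => 𝕜) where
  toFun y := WithLp.toLp q (fun β => y (β : Γ))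
  map_add' y z := by ext β; simp [lp.coeFn_add]
  map_smul' c y := by ext β; simp [lp.coeFn_smul]

lemma lpRestr_apply (s : Finset Γ) (y : lp (fun _ : Γ => 𝕜) q) (β : s) :
    lpRestr q s y β = y (β : Γ) := rfl

lemma lpRestr_norm_rpow (hq0 : 0 < q.toReal) (s : Finset Γ) (y : lp (fun _ : Γ => 𝕜) q) :
    ‖lpRestr q s y‖ ^ q.toReal = ∑ β ∈ s, ‖y β‖ ^ q.toReal := by
  rw [PiLp.norm_eq_sum hq0, ← Real.rpow_mul (by positivity), one_div,
    inv_mul_cancel₀ hq0.ne', Real.rpow_one]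
  rw [← Finset.sum_coe_sort s (fun β => ‖y β‖ ^ q.toReal)]
  rfl

lemma lpRestr_norm_le (hq0 : 0 < q.toReal) (s : Finset Γ) (y : lp (fun _ : Γ => 𝕜) q) :
    ‖lpRestr q s y‖ ≤ ‖y‖ := by
  have h1 : ‖lpRestr q s y‖ ^ q.toReal ≤ ‖y‖ ^ q.toReal := by
    rw [lpRestr_norm_rpow hq0]
    exact lp.sum_rpow_le_norm_rpow hq0 y s
  exact (Real.rpow_le_rpow_iff (norm_nonneg _) (lp.norm_nonneg' y) hq0).mp h1









set_option maxHeartbeats 1000000 in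
theorem no_lp_injection {Γ : Type*} [Uncountable Γ] {p q : ℝ≥0∞}
    [Fact (1 ≤ p)] [Fact (1 ≤ q)] (hp : p ≠ ∞) (hq : q ≠ ∞) (hqp : q < p)
    (T : lp (fun _ : Γ => 𝕜) p →L[𝕜] lp (fun _ : Γ => 𝕜) q) :
    ¬ Function.Injective T := by
  classical
  intro hinj
  have hp1 : (1 : ℝ≥0∞) ≤ p := Fact.out
  have hq1 : (1 : ℝ≥0∞) ≤ q := Fact.out
  set pr := p.toReal with hpr_def
  set qr := q.toReal with hqr_def
  have hq0 : 0 < qr := ENNReal.toReal_pos (by rintro rfl; simp at hq1) hq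
  have hp0 : 0 < pr := ENNReal.toReal_pos (by rintro rfl; simp at hp1) hp
  have hqr1 : 1 ≤ qr := by
    have := ENNReal.toReal_mono hq hq1; simpa using this
  have hqrpr : qr < pr := ENNReal.toReal_strict_mono hp hqp
  have hpr1 : 1 < pr := lt_of_le_of_lt hqr1 hqrpr
  set g : Γ → lp (fun _ : Γ => 𝕜) q := fun γ => T (lp.single p γ 1) with hg_def
  set M : ℝ := ‖T‖ with hM_def
  have hsingle_norm : ∀ γ : Γ, ‖(lp.single p γ (1 : 𝕜) : lp (fun _ : Γ => 𝕜) p)‖ = 1 := by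
    intro γ
    simpa using lp.norm_single (E := fun _ : Γ => 𝕜) (lt_of_lt_of_le zero_lt_one hp1) γ (1 : 𝕜)
  have hgM : ∀ γ, ‖g γ‖ ≤ M := by
    intro γ
    calc ‖g γ‖ ≤ ‖T‖ * ‖(lp.single p γ (1:𝕜) : lp (fun _ : Γ => 𝕜) p)‖ := T.le_opNorm _
    _ = M := by rw [hsingle_norm, mul_one]
  have hgpos : ∀ γ, 0 < ‖g γ‖ := by
    intro γ
    rw [norm_pos_iff]
    intro h0
    have : (lp.single p γ (1:𝕜) : lp (fun _ : Γ => 𝕜) p) = 0 := hinj (by show T _ = T 0; rw [map_zero]; exact h0)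
    have h1 : (lp.single p γ (1:𝕜) : ∀ _ : Γ, 𝕜) γ = 0 := by rw [this]; simp
    rw [lp.single_apply_self] at h1
    exact one_ne_zero h1
  -- uniform lower bound δ on an uncountable set A
  obtain ⟨A, hA, δ, hδ0, hgδ⟩ :
      ∃ A : Set Γ, ¬ A.Countable ∧ ∃ δ : ℝ, 0 < δ ∧ ∀ γ ∈ A, δ ≤ ‖g γ‖ := by
    have h1 : ∀ γ : Γ, ∃ n : ℕ, 1 / (n + 1 : ℝ) ≤ ‖g γ‖ := by
      intro γ
      obtain ⟨n, hn⟩ := exists_nat_one_div_lt (hgpos γ)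
      exact ⟨n, hn.le⟩
    choose nf hnf using h1
    obtain ⟨n, hn⟩ := uncountable_pigeonhole (A := (Set.univ : Set Γ))
      (Set.not_countable_univ_iff.mpr inferInstance) nf
    refine ⟨Set.univ ∩ nf ⁻¹' {n}, hn, 1/(n+1:ℝ), by positivity, ?_⟩
    intro γ hγ
    have h2 : nf γ = n := hγ.2
    rw [← h2]
    exact hnf γ
  have hδM : δ ≤ M := by
    have hne : A.Nonempty := by
      rcases Set.eq_empty_or_nonempty A with h | h
      · exact absurd (h ▸ Set.countable_empty) hA
      · exact h
    obtain ⟨γ, hγ⟩ := hne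
    exact le_trans (hgδ γ hγ) (hgM γ)
  have hM0 : 0 < M := lt_of_lt_of_le hδ0 hδM
  -- choice of N
  obtain ⟨N, hN1, hNi, hNii⟩ :
      ∃ N : ℕ, 1 ≤ N ∧ M * (N:ℝ) ^ (1/pr) < (δ/3) * (N:ℝ) ^ (1/qr) ∧
        M * (N:ℝ) ^ (1/pr) < (δ/4) * (N:ℝ) := by
    have he1 : 0 < 1/qr - 1/pr := by
      have h := one_div_lt_one_div_of_lt hq0 hqrpr
      linarith
    have he2 : 0 < 1 - 1/pr := by
      have h : 1/pr < 1 := by rw [div_lt_one hp0]; exact hpr1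
      linarith
    have h1 : Tendsto (fun n : ℕ => (n:ℝ) ^ (1/qr - 1/pr)) atTop atTop :=
      (tendsto_rpow_atTop he1).comp tendsto_natCast_atTop_atTop
    have h2 : Tendsto (fun n : ℕ => (n:ℝ) ^ (1 - 1/pr)) atTop atTop :=
      (tendsto_rpow_atTop he2).comp tendsto_natCast_atTop_atTop
    obtain ⟨N, hN⟩ := ((eventually_ge_atTop 1).and ((h1.eventually_gt_atTop (3*M/δ)).and
      (h2.eventually_gt_atTop (4*M/δ)))).exists
    obtain ⟨hN1, hc1, hc2⟩ := hN
    have hNpos : (0:ℝ) < N := by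
      have : (1:ℝ) ≤ N := by exact_mod_cast hN1
      linarith
    have hrp : 0 < (N:ℝ)^(1/pr) := Real.rpow_pos_of_pos hNpos _
    refine ⟨N, hN1, ?_, ?_⟩
    · have key : (N:ℝ)^(1/qr) = (N:ℝ)^(1/pr) * (N:ℝ)^(1/qr - 1/pr) := by
        rw [← Real.rpow_add hNpos]; ring_nf
      have hM' : M < δ/3 * (N:ℝ)^(1/qr - 1/pr) := by
        rw [div_lt_iff₀ hδ0] at hc1
        nlinarith
      calc M * (N:ℝ)^(1/pr) < (δ/3 * (N:ℝ)^(1/qr - 1/pr)) * (N:ℝ)^(1/pr) :=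
            mul_lt_mul_of_pos_right hM' hrp
      _ = (δ/3) * (N:ℝ)^(1/qr) := by rw [key]; ring
    · have hM' : M < δ/4 * (N:ℝ)^(1 - 1/pr) := by
        rw [div_lt_iff₀ hδ0] at hc2
        nlinarith
      calc M * (N:ℝ)^(1/pr) < (δ/4 * (N:ℝ)^(1 - 1/pr)) * (N:ℝ)^(1/pr) :=
            mul_lt_mul_of_pos_right hM' hrp
      _ = (δ/4) * ((N:ℝ)^(1 - 1/pr) * (N:ℝ)^(1/pr)) := by ring
      _ = (δ/4) * (N:ℝ) := by rw [← Real.rpow_add hNpos]; norm_num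
  set η : ℝ := δ / (100 * N) with hη_def
  have hη0 : 0 < η := by positivity
  have hNη : (N:ℝ) * η = δ / 100 := by
    rw [hη_def]; field_simp
  have hN1' : (1:ℝ) ≤ (N:ℝ) := by exact_mod_cast hN1
  have hη100 : η ≤ δ / 100 := by
    rw [hη_def, div_le_div_iff₀ (by linarith) (by norm_num)]
    nlinarith
  -- finite sets capturing most of the norm
  obtain ⟨Fs, hFs⟩ : ∃ Fs : Γ → Finset Γ,
      ∀ γ, ‖g γ‖ ^ qr - η ^ qr ≤ ∑ β ∈ Fs γ, ‖g γ β‖ ^ qr := by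
    have h1 : ∀ γ : Γ, ∃ F : Finset Γ, ‖g γ‖ ^ qr - η ^ qr ≤ ∑ β ∈ F, ‖g γ β‖ ^ qr := by
      intro γ
      have hh := lp.hasSum_norm hq0 (g γ)
      have hlt : ‖g γ‖ ^ qr - η ^ qr < ‖g γ‖ ^ qr := by
        have := Real.rpow_pos_of_pos hη0 qr
        linarith
      obtain ⟨F, hF⟩ := (Filter.Tendsto.eventually hh (eventually_gt_nhds hlt)).exists
      exact ⟨F, hF.le⟩
    exact ⟨fun γ => (h1 γ).choose, fun γ => (h1 γ).choose_spec⟩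
  have htail : ∀ γ (s : Finset Γ), Disjoint s (Fs γ) →
      ∑ β ∈ s, ‖g γ β‖ ^ qr ≤ η ^ qr := by
    intro γ s hdisj
    have h1 := lp.sum_rpow_le_norm_rpow hq0 (g γ) (s ∪ Fs γ)
    rw [Finset.sum_union hdisj] at h1
    have h2 := hFs γ
    linarith
  -- pigeonhole on card + weak Δ-system + Bolzano–Weierstrass + case dichotomy,
  -- producing the final sequence σ
  obtain ⟨R, σ, hσinj, hσA, hσR, hσclose, hσcase⟩ :
      ∃ (R : Finset Γ) (σ : ℕ → Γ), Function.Injective σ ∧ (∀ k, σ k ∈ A) ∧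
        (∀ j k, j ≠ k → ∀ y, y ∈ Fs (σ j) → y ∈ Fs (σ k) → y ∈ R) ∧
        (∀ j k, ‖lpRestr q R (g (σ j)) - lpRestr q R (g (σ k))‖ ≤ η) ∧
        ((∀ k, (δ/2) ^ qr ≤ ∑ β ∈ Fs (σ k) \ R, ‖g (σ k) β‖ ^ qr) ∨
         (∀ k, ∑ β ∈ Fs (σ k) \ R, ‖g (σ k) β‖ ^ qr ≤ (δ/2) ^ qr)) := by
    obtain ⟨n₀, hn₀⟩ := uncountable_pigeonhole hA (fun γ => (Fs γ).card)
    obtain ⟨R, c, hcinj, hcA, hcR⟩ := exists_weak_delta n₀ _ hn₀ Fs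
      (fun γ hγ => le_of_eq hγ.2)
    set V : ℕ → PiLp q (fun _ : R => 𝕜) := fun k => lpRestr q R (g (c k)) with hV
    have hVle : ∀ k, V k ∈ Metric.closedBall (0 : PiLp q (fun _ : R => 𝕜)) M := by
      intro k
      rw [Metric.mem_closedBall, dist_zero_right]
      exact le_trans (lpRestr_norm_le hq0 R _) (hgM _)
    haveI : ProperSpace (PiLp q (fun _ : R => 𝕜)) := FiniteDimensional.proper_rclike 𝕜 _
    obtain ⟨a, -, φ, hφ, hconv⟩ :=
      tendsto_subseq_of_bounded Metric.isBounded_closedBall hVle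
    rw [Metric.tendsto_atTop] at hconv
    obtain ⟨K, hK⟩ := hconv (η/2) (by positivity)
    set w : ℕ → ℝ := fun k => ∑ β ∈ Fs (c (φ (k + K))) \ R, ‖g (c (φ (k + K))) β‖ ^ qr
      with hw
    obtain ⟨ψ, hψinj, hcase⟩ : ∃ ψ : ℕ → ℕ, Function.Injective ψ ∧
        ((∀ k, (δ/2)^qr ≤ w (ψ k)) ∨ (∀ k, w (ψ k) ≤ (δ/2)^qr)) := by
      by_cases hS : {k | (δ/2)^qr ≤ w k}.Infinite
      · exact ⟨fun k => (hS.natEmbedding _ k : ℕ),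
          fun i j h => (hS.natEmbedding _).injective (Subtype.ext h),
          Or.inl (fun k => (hS.natEmbedding _ k).2)⟩
      · have hS' : {k | w k ≤ (δ/2)^qr}.Infinite := by
          rw [Set.not_infinite] at hS
          refine Set.Infinite.mono ?_ hS.infinite_compl
          intro k hk
          exact le_of_not_ge (by simpa using hk)
        exact ⟨fun k => (hS'.natEmbedding _ k : ℕ),
          fun i j h => (hS'.natEmbedding _).injective (Subtype.ext h),
          Or.inr (fun k => (hS'.natEmbedding _ k).2)⟩
    have haux : Function.Injective (fun k => φ (ψ k + K)) := by
      intro i j h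
      have h1 : ψ i + K = ψ j + K := hφ.injective h
      exact hψinj (by omega)
    refine ⟨R, fun k => c (φ (ψ k + K)), hcinj.comp haux, fun k => (hcA _).1, ?_, ?_, ?_⟩
    · intro j k hjk y hy1 hy2
      exact hcR _ _ (fun h => hjk (haux h)) y hy1 hy2
    · intro j k
      have h1 : dist (V (φ (ψ j + K))) a < η/2 := hK (ψ j + K) (by omega)
      have h2 : dist (V (φ (ψ k + K))) a < η/2 := hK (ψ k + K) (by omega)
      have h3 : dist (V (φ (ψ j + K))) (V (φ (ψ k + K))) ≤ η := by
        calc dist (V (φ (ψ j + K))) (V (φ (ψ k + K))) ≤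
            dist (V (φ (ψ j + K))) a + dist a (V (φ (ψ k + K))) := dist_triangle _ _ _
        _ ≤ η := by rw [dist_comm a]; linarith
      rw [dist_eq_norm] at h3
      exact h3
    · exact hcase
  -- the test vector x
  set x : lp (fun _ : Γ => 𝕜) p := ∑ k ∈ Finset.range N, lp.single p (σ k) (1:𝕜) with hx_def
  have hxnorm : ‖x‖ = (N:ℝ) ^ (1/pr) := by
    have himg : x = ∑ γ ∈ (Finset.range N).image σ, lp.single p γ (1:𝕜) := by
      rw [hx_def, Finset.sum_image (fun a _ b _ h => hσinj h)]
    have h1 : ‖x‖ ^ pr = (N:ℝ) := by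
      rw [himg]
      rw [lp.norm_sum_single hp0 (fun _ : Γ => (1:𝕜)) ((Finset.range N).image σ)]
      simp [Finset.card_image_of_injective _ hσinj]
    calc ‖x‖ = (‖x‖ ^ pr) ^ (1/pr) := by
          rw [one_div, Real.rpow_rpow_inv (norm_nonneg _) hp0.ne']
    _ = (N:ℝ) ^ (1/pr) := by rw [h1]
  have hTx : (T x : lp (fun _ : Γ => 𝕜) q) = ∑ k ∈ Finset.range N, g (σ k) := by
    rw [hx_def, map_sum]
  have hTxle : ‖T x‖ ≤ M * (N:ℝ) ^ (1/pr) := by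
    calc ‖T x‖ ≤ ‖T‖ * ‖x‖ := T.le_opNorm x
    _ = M * (N:ℝ) ^ (1/pr) := by rw [hxnorm]
  rcases hσcase with hbig | hsmall
  · -- case 1: mass on the disjoint parts
    set D : ℕ → Finset Γ := fun k => Fs (σ k) \ R with hD
    have hcross : ∀ k j, j ≠ k → ‖lpRestr q (D k) (g (σ j))‖ ≤ η := by
      intro k j hjk
      have hdisj : Disjoint (D k) (Fs (σ j)) := by
        rw [Finset.disjoint_left]
        intro y hyD hyF
        rw [hD] at hyD
        simp only [Finset.mem_sdiff] at hyD
        exact hyD.2 (hσR k j (Ne.symm hjk) y hyD.1 hyF)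
      have h1 : ‖lpRestr q (D k) (g (σ j))‖ ^ qr ≤ η ^ qr := by
        rw [lpRestr_norm_rpow hq0]
        exact htail (σ j) (D k) hdisj
      exact (Real.rpow_le_rpow_iff (norm_nonneg _) hη0.le hq0).mp h1
    have hmain : ∀ k ∈ Finset.range N, δ/3 ≤ ‖lpRestr q (D k) ((T x : lp (fun _ : Γ => 𝕜) q))‖ := by
      intro k hk
      have hsplit : lpRestr q (D k) ((T x : lp (fun _ : Γ => 𝕜) q)) =
          lpRestr q (D k) (g (σ k)) +
          ∑ j ∈ (Finset.range N).erase k, lpRestr q (D k) (g (σ j)) := by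
        rw [hTx, map_sum, ← Finset.add_sum_erase _ _ hk]
      have hbk : δ/2 ≤ ‖lpRestr q (D k) (g (σ k))‖ := by
        have h1 : (δ/2) ^ qr ≤ ‖lpRestr q (D k) (g (σ k))‖ ^ qr := by
          rw [lpRestr_norm_rpow hq0]
          exact hbig k
        exact (Real.rpow_le_rpow_iff (by positivity) (norm_nonneg _) hq0).mp h1
      have hrest : ‖∑ j ∈ (Finset.range N).erase k, lpRestr q (D k) (g (σ j))‖ ≤ δ/100 := by
        calc ‖∑ j ∈ (Finset.range N).erase k, lpRestr q (D k) (g (σ j))‖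
            ≤ ∑ j ∈ (Finset.range N).erase k, ‖lpRestr q (D k) (g (σ j))‖ := norm_sum_le _ _
        _ ≤ ∑ j ∈ (Finset.range N).erase k, η :=
            Finset.sum_le_sum (fun j hj => hcross k j (Finset.ne_of_mem_erase hj))
        _ = ((Finset.range N).erase k).card * η := by rw [Finset.sum_const, nsmul_eq_mul]
        _ ≤ (N:ℝ) * η := by
            refine mul_le_mul_of_nonneg_right ?_ hη0.le
            have h2 : ((Finset.range N).erase k).card ≤ N := by
              calc ((Finset.range N).erase k).card ≤ (Finset.range N).card :=
                    Finset.card_le_card (Finset.erase_subset _ _)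
              _ = N := Finset.card_range N
            exact_mod_cast h2
        _ = δ/100 := hNη
      have h2 : ‖lpRestr q (D k) (g (σ k))‖ ≤
          ‖lpRestr q (D k) ((T x : lp (fun _ : Γ => 𝕜) q))‖ + δ/100 := by
        have h3 : lpRestr q (D k) (g (σ k)) = lpRestr q (D k) ((T x : lp (fun _ : Γ => 𝕜) q)) -
            ∑ j ∈ (Finset.range N).erase k, lpRestr q (D k) (g (σ j)) := by
          rw [hsplit]; abel
        rw [h3]
        exact le_trans (norm_sub_le _ _) (by linarith)
      linarith
    have hpd : (↑(Finset.range N) : Set ℕ).PairwiseDisjoint D := by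
      intro j _ k _ hjk
      rw [Function.onFun, Finset.disjoint_left]
      intro y hyj hyk
      rw [hD] at hyj hyk
      simp only [Finset.mem_sdiff] at hyj hyk
      exact hyj.2 (hσR j k hjk y hyj.1 hyk.1)
    have hsum : (N:ℝ) * (δ/3)^qr ≤ ‖T x‖ ^ qr := by
      have h1 : ∀ k ∈ Finset.range N, (δ/3)^qr ≤ ∑ β ∈ D k, ‖(T x : lp (fun _ : Γ => 𝕜) q) β‖ ^ qr := by
        intro k hk
        rw [← lpRestr_norm_rpow hq0]
        exact Real.rpow_le_rpow (by positivity) (hmain k hk) hq0.le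
      calc (N:ℝ) * (δ/3)^qr = ∑ _k ∈ Finset.range N, (δ/3)^qr := by
            rw [Finset.sum_const, Finset.card_range, nsmul_eq_mul]
      _ ≤ ∑ k ∈ Finset.range N, ∑ β ∈ D k, ‖(T x : lp (fun _ : Γ => 𝕜) q) β‖ ^ qr :=
            Finset.sum_le_sum h1
      _ = ∑ β ∈ (Finset.range N).biUnion D, ‖(T x : lp (fun _ : Γ => 𝕜) q) β‖ ^ qr :=
            (Finset.sum_biUnion hpd).symm
      _ ≤ ‖T x‖ ^ qr := lp.sum_rpow_le_norm_rpow hq0 _ _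
    have h3 : (δ/3) * (N:ℝ)^(1/qr) ≤ ‖T x‖ := by
      have h4 : ((δ/3) * (N:ℝ)^(1/qr))^qr ≤ ‖T x‖^qr := by
        rw [Real.mul_rpow (by positivity) (by positivity), one_div,
          Real.rpow_inv_rpow (Nat.cast_nonneg N) hq0.ne']
        calc (δ/3)^qr * (N:ℝ) = (N:ℝ) * (δ/3)^qr := by ring
        _ ≤ ‖T x‖^qr := hsum
      exact (Real.rpow_le_rpow_iff (by positivity) (norm_nonneg _) hq0).mp h4
    linarith
  · -- case 2: mass on the root R
    have hRk : ∀ k, δ/3 ≤ ‖lpRestr q R (g (σ k))‖ := by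
      intro k
      have hsub : Fs (σ k) ⊆ R ∪ (Fs (σ k) \ R) := by
        intro y hy
        by_cases h : y ∈ R
        · exact Finset.mem_union_left _ h
        · exact Finset.mem_union_right _ (Finset.mem_sdiff.mpr ⟨hy, h⟩)
      have hdisj : Disjoint R (Fs (σ k) \ R) := Finset.disjoint_sdiff
      have h1 : ∑ β ∈ Fs (σ k), ‖g (σ k) β‖^qr ≤
          ∑ β ∈ R, ‖g (σ k) β‖^qr + ∑ β ∈ Fs (σ k) \ R, ‖g (σ k) β‖^qr := by
        rw [← Finset.sum_union hdisj]
        exact Finset.sum_le_sum_of_subset_of_nonneg hsub (fun β _ _ => by positivity)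
      have h2 := hFs (σ k)
      have h3 : δ ^ qr ≤ ‖g (σ k)‖ ^ qr :=
        Real.rpow_le_rpow hδ0.le (hgδ _ (hσA k)) hq0.le
      have hsm := hsmall k
      have hδq : 0 < δ ^ qr := Real.rpow_pos_of_pos hδ0 qr
      have e2 : (δ/2)^qr ≤ δ^qr * (1/2) := by
        calc (δ/2)^qr = δ^qr * (1/2:ℝ)^qr := by
              rw [← Real.mul_rpow hδ0.le (by norm_num)]; ring_nf
        _ ≤ δ^qr * (1/2) := by
              refine mul_le_mul_of_nonneg_left ?_ hδq.le
              calc (1/2:ℝ)^qr ≤ (1/2:ℝ)^(1:ℝ) :=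
                    Real.rpow_le_rpow_of_exponent_ge (by norm_num) (by norm_num) hqr1
              _ = 1/2 := Real.rpow_one _
      have e3 : (δ/3)^qr ≤ δ^qr * (1/3) := by
        calc (δ/3)^qr = δ^qr * (1/3:ℝ)^qr := by
              rw [← Real.mul_rpow hδ0.le (by norm_num)]; ring_nf
        _ ≤ δ^qr * (1/3) := by
              refine mul_le_mul_of_nonneg_left ?_ hδq.le
              calc (1/3:ℝ)^qr ≤ (1/3:ℝ)^(1:ℝ) :=
                    Real.rpow_le_rpow_of_exponent_ge (by norm_num) (by norm_num) hqr1
              _ = 1/3 := Real.rpow_one _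
      have e1 : η^qr ≤ δ^qr * (1/100) := by
        calc η^qr ≤ (δ/100)^qr := Real.rpow_le_rpow hη0.le hη100 hq0.le
        _ = δ^qr * (1/100:ℝ)^qr := by
              rw [← Real.mul_rpow hδ0.le (by norm_num)]; ring_nf
        _ ≤ δ^qr * (1/100) := by
              refine mul_le_mul_of_nonneg_left ?_ hδq.le
              calc (1/100:ℝ)^qr ≤ (1/100:ℝ)^(1:ℝ) :=
                    Real.rpow_le_rpow_of_exponent_ge (by norm_num) (by norm_num) hqr1
              _ = 1/100 := Real.rpow_one _
      have h4 : (δ/3)^qr ≤ ‖lpRestr q R (g (σ k))‖^qr := by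
        rw [lpRestr_norm_rpow hq0]
        linarith
      exact (Real.rpow_le_rpow_iff (by positivity) (norm_nonneg _) hq0).mp h4
    have hsplit : lpRestr q R ((T x : lp (fun _ : Γ => 𝕜) q)) =
        (∑ k ∈ Finset.range N, (lpRestr q R (g (σ k)) - lpRestr q R (g (σ 0)))) +
          N • lpRestr q R (g (σ 0)) := by
      rw [hTx, map_sum, Finset.sum_sub_distrib, Finset.sum_const, Finset.card_range]
      abel
    have hdiff : ‖∑ k ∈ Finset.range N, (lpRestr q R (g (σ k)) - lpRestr q R (g (σ 0)))‖
        ≤ δ/100 := by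
      calc ‖∑ k ∈ Finset.range N, (lpRestr q R (g (σ k)) - lpRestr q R (g (σ 0)))‖
          ≤ ∑ k ∈ Finset.range N, ‖lpRestr q R (g (σ k)) - lpRestr q R (g (σ 0))‖ :=
            norm_sum_le _ _
      _ ≤ ∑ _k ∈ Finset.range N, η := Finset.sum_le_sum (fun k _ => hσclose k 0)
      _ = (N:ℝ) * η := by rw [Finset.sum_const, Finset.card_range, nsmul_eq_mul]
      _ = δ/100 := hNη
    have hns : ‖(N • lpRestr q R (g (σ 0)) : PiLp q (fun _ : R => 𝕜))‖ =
        (N:ℝ) * ‖lpRestr q R (g (σ 0))‖ := by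
      rw [← Nat.cast_smul_eq_nsmul ℝ, norm_smul]
      simp
    have h5 : (δ/4) * (N:ℝ) ≤ ‖lpRestr q R ((T x : lp (fun _ : Γ => 𝕜) q))‖ := by
      have h6 : ‖(N • lpRestr q R (g (σ 0)) : PiLp q (fun _ : R => 𝕜))‖ ≤
          ‖lpRestr q R ((T x : lp (fun _ : Γ => 𝕜) q))‖ + δ/100 := by
        have h7 : (N • lpRestr q R (g (σ 0)) : PiLp q (fun _ : R => 𝕜)) =
            lpRestr q R ((T x : lp (fun _ : Γ => 𝕜) q)) -
            ∑ k ∈ Finset.range N, (lpRestr q R (g (σ k)) - lpRestr q R (g (σ 0))) := by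
          rw [hsplit]; abel
        rw [h7]
        exact le_trans (norm_sub_le _ _) (by linarith)
      rw [hns] at h6
      have h8 : (N:ℝ) * (δ/3) ≤ (N:ℝ) * ‖lpRestr q R (g (σ 0))‖ :=
        mul_le_mul_of_nonneg_left (hRk 0) (by positivity)
      nlinarith
    have h6 : ‖lpRestr q R ((T x : lp (fun _ : Γ => 𝕜) q))‖ ≤ ‖T x‖ :=
      lpRestr_norm_le hq0 _ _
    linarith

end Helpers

/-- For an uncountable set `Γ` and `p, q ∈ [1, ∞)`, there is a bounded linear injection
`ℓ_p(Γ) → ℓ_q(Γ)` if and only if `p ≤ q`. -/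
theorem stmt17 {𝕜 : Type*} [RCLike 𝕜] {Γ : Type*} [Uncountable Γ]
    (p q : ℝ≥0∞) [Fact (1 ≤ p)] [Fact (1 ≤ q)] (hp : p ≠ ∞) (hq : q ≠ ∞) :
    (∃ f : lp (fun _ : Γ => 𝕜) p →L[𝕜] lp (fun _ : Γ => 𝕜) q, Function.Injective f) ↔
      p ≤ q := by
  constructor
  · rintro ⟨f, hf⟩
    by_contra hle
    rw [not_le] at hle
    exact no_lp_injection hp hq hle f hf
  · intro hpq
    exact exists_lp_inclusion hp hq hpq
end

section
/- Let T: X → Y be a bounded operator between Banach spaces with separable image, where Y is an Asplund space. Then the adjoint T*: Y* → X* has separable image. -/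
open NormedSpace TopologicalSpace

/-- If `T : X → Y` is a bounded operator with separable image into an Asplund space `Y`
(every separable closed subspace of `Y` has separable dual), then the Banach-space adjoint
`T* : Y* → X*`, `T* f = f ∘ T`, has separable image. -/
theorem stmt19 {𝕜 : Type*} [RCLike 𝕜] {X Y : Type*}
    [NormedAddCommGroup X] [NormedSpace 𝕜 X] [CompleteSpace X]
    [NormedAddCommGroup Y] [NormedSpace 𝕜 Y] [CompleteSpace Y]
    (hAsplund : ∀ Z : Submodule 𝕜 Y, IsClosed (Z : Set Y) →
      IsSeparable (Z : Set Y) → SeparableSpace (StrongDual 𝕜 Z))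
    (T : X →L[𝕜] Y) (hT : IsSeparable (Set.range T)) :
    IsSeparable (Set.range ((ContinuousLinearMap.compL 𝕜 X Y 𝕜).flip T)) := by
  set Z : Submodule 𝕜 Y := (LinearMap.range (T : X →ₗ[𝕜] Y)).topologicalClosure with hZdef
  have hZclosed : IsClosed (Z : Set Y) :=
    (LinearMap.range (T : X →ₗ[𝕜] Y)).isClosed_topologicalClosure
  have hZsep : IsSeparable (Z : Set Y) := by
    have h1 : (Z : Set Y) = closure (Set.range T) := by
      rw [hZdef, Submodule.topologicalClosure_coe]; congr 1
    rw [h1]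
    exact hT.closure
  haveI := hAsplund Z hZclosed hZsep
  have hmem : ∀ x, T x ∈ Z := fun x =>
    Submodule.le_topologicalClosure _ (LinearMap.mem_range_self _ x)
  set T₀ : X →L[𝕜] Z := T.codRestrict Z hmem with hT₀
  have key : Set.range ((ContinuousLinearMap.compL 𝕜 X Y 𝕜).flip T) ⊆
      Set.range ((ContinuousLinearMap.compL 𝕜 X Z 𝕜).flip T₀) := by
    rintro _ ⟨f, rfl⟩
    exact ⟨f.comp Z.subtypeL, by ext x; rfl⟩
  refine IsSeparable.mono ?_ key
  have huniv : IsSeparable (Set.univ : Set (StrongDual 𝕜 Z)) :=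
    TopologicalSpace.isSeparable_univ_iff.2 ‹_›
  have himg := huniv.image ((ContinuousLinearMap.compL 𝕜 X Z 𝕜).flip T₀).continuous
  rwa [Set.image_univ] at himg
end
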